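/- Let a soft-attention transformer be given. There is a constant K, depending only on the transformer's parameters (the number of layers L, the number of heads H, the embedding norm bounds, the norms of the attention parameter matrices, and the Lipschitz constants of the feedforward networks) but not on the input length n, such that for all n ≥ 2 and all inputs x, x' ∈ 𝒱ⁿ that differ in exactly one position i with i < n, the final activations satisfy ‖y_n^{(L)}(x) − y_n^{(L)}(x')‖ ≤ K/n. -/

import Mathlib

open scoped BigOperators

/-- Softmax weights: `softmaxW a j = exp (a j) / ∑ j', exp (a j')`. -/
noncomputable def softmaxW {n : ℕ} (a : Fin n → ℝ) (j : Fin n) : ℝ :=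
  Real.exp (a j) / ∑ j' : Fin n, Real.exp (a j')

/-- A soft-attention transformer over alphabet `V` with activations in `ℝ^d`:
`L` layers, `H` heads per layer, uniformly norm-bounded input embeddings `emb` and
positional embeddings `pos` (bound `B`), a Lipschitz map `f0` combining them into the
layer-0 activations, per-layer-and-head query/key parameter matrices `Q, K` for
(scaled) dot-product attention scores, and Lipschitz-continuous (ReLU feedforward,
with skip connection) activation maps `fact k` computing the layer-`(k+1)` activation
from the layer-`k` activation and the `H` head values. -/
structure SoftTransformer (V : Type) (d : ℕ) where
  L : ℕ
  H : ℕ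
  emb : V → (Fin d → ℝ)
  pos : ℕ → (Fin d → ℝ)
  B : ℝ
  emb_bound : ∀ a : V, ‖emb a‖ ≤ B
  pos_bound : ∀ i : ℕ, ‖pos i‖ ≤ B
  f0 : (Fin d → ℝ) × (Fin d → ℝ) → (Fin d → ℝ)
  K0 : NNReal
  f0_lip : LipschitzWith K0 f0
  Q : ℕ → Fin H → Matrix (Fin d) (Fin d) ℝ
  K : ℕ → Fin H → Matrix (Fin d) (Fin d) ℝ
  fact : (k : ℕ) → (Fin d → ℝ) × (Fin H → Fin d → ℝ) → (Fin d → ℝ)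
  Kact : ℕ → NNReal
  fact_lip : ∀ k : ℕ, LipschitzWith (Kact k) (fact k)

/-- Activations of a soft-attention transformer on input `x` of length `n`:
`act x k i` is `y_i^{(k)}`.  The head value `b_{i,k+1,h}` is the softmax-weighted
average `∑ j â_{i,j} y_j^{(k)}` with dot-product attention scores
`(Q y_i^{(k)}) ⬝ᵥ (K y_j^{(k)})`. -/
noncomputable def SoftTransformer.act {V : Type} {d : ℕ} (T : SoftTransformer V d)
    {n : ℕ} (x : Fin n → V) : ℕ → Fin n → (Fin d → ℝ)
  | 0, i => T.f0 (T.emb (x i), T.pos (i.val + 1))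
  | k + 1, i =>
      T.fact k (T.act x k i,
        fun h => ∑ j : Fin n,
          softmaxW (fun j' : Fin n =>
              dotProduct (Matrix.mulVec (T.Q k h) (T.act x k i))
                (Matrix.mulVec (T.K k h) (T.act x k j'))) j • T.act x k j)


/-! ### Auxiliary lemmas -/

noncomputable def matC {d : ℕ} (A : Matrix (Fin d) (Fin d) ℝ) : ℝ :=
  ∑ a : Fin d, ∑ b : Fin d, |A a b|

lemma matC_nonneg {d : ℕ} (A : Matrix (Fin d) (Fin d) ℝ) : 0 ≤ matC A :=
  Finset.sum_nonneg fun _ _ => Finset.sum_nonneg fun _ _ => abs_nonneg _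

lemma mulVec_norm_le {d : ℕ} (A : Matrix (Fin d) (Fin d) ℝ) (v : Fin d → ℝ) :
    ‖A.mulVec v‖ ≤ matC A * ‖v‖ := by
  rw [pi_norm_le_iff_of_nonneg (mul_nonneg (matC_nonneg A) (norm_nonneg v))]
  intro i
  rw [Real.norm_eq_abs]
  calc |A.mulVec v i| = |∑ j, A i j * v j| := rfl
    _ ≤ ∑ j, |A i j * v j| := Finset.abs_sum_le_sum_abs _ _
    _ ≤ ∑ j, |A i j| * ‖v‖ := by
        refine Finset.sum_le_sum fun j _ => ?_
        rw [abs_mul]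
        exact mul_le_mul_of_nonneg_left ((Real.norm_eq_abs _ ▸ norm_le_pi_norm v j)) (abs_nonneg _)
    _ = (∑ j, |A i j|) * ‖v‖ := by rw [Finset.sum_mul]
    _ ≤ matC A * ‖v‖ := by
        refine mul_le_mul_of_nonneg_right ?_ (norm_nonneg _)
        exact Finset.single_le_sum (f := fun a => ∑ b, |A a b|)
          (fun a _ => Finset.sum_nonneg fun _ _ => abs_nonneg _) (Finset.mem_univ i)

lemma dot_abs_le {d : ℕ} (u w : Fin d → ℝ) :
    |dotProduct u w| ≤ d * ‖u‖ * ‖w‖ := by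
  calc |dotProduct u w| = |∑ j, u j * w j| := rfl
    _ ≤ ∑ j, |u j * w j| := Finset.abs_sum_le_sum_abs _ _
    _ ≤ ∑ _j : Fin d, ‖u‖ * ‖w‖ := by
        refine Finset.sum_le_sum fun j _ => ?_
        rw [abs_mul]
        exact mul_le_mul (Real.norm_eq_abs _ ▸ norm_le_pi_norm u j)
          (Real.norm_eq_abs _ ▸ norm_le_pi_norm w j) (abs_nonneg _) (norm_nonneg _)
    _ = d * ‖u‖ * ‖w‖ := by simp [mul_assoc]

lemma score_abs_le {d : ℕ} (Q K : Matrix (Fin d) (Fin d) ℝ) (u v : Fin d → ℝ) :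
    |dotProduct (Q.mulVec u) (K.mulVec v)| ≤
      d * matC Q * matC K * (‖u‖ * ‖v‖) := by
  calc |dotProduct (Q.mulVec u) (K.mulVec v)|
      ≤ d * ‖Q.mulVec u‖ * ‖K.mulVec v‖ := dot_abs_le _ _
    _ ≤ d * (matC Q * ‖u‖) * (matC K * ‖v‖) := by
        refine mul_le_mul (mul_le_mul_of_nonneg_left (mulVec_norm_le Q u) (by positivity))
          (mulVec_norm_le K v) (norm_nonneg _) ?_
        exact mul_nonneg (Nat.cast_nonneg d) (mul_nonneg (matC_nonneg Q) (norm_nonneg u))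
    _ = d * matC Q * matC K * (‖u‖ * ‖v‖) := by ring

lemma abs_exp_sub_exp_le {C x y : ℝ} (hx : |x| ≤ C) (hy : |y| ≤ C) :
    |Real.exp x - Real.exp y| ≤ Real.exp C * |x - y| := by
  wlog h : y ≤ x generalizing x y
  · rw [abs_sub_comm, abs_sub_comm x y]; exact this hy hx (le_of_not_ge h)
  have hx' : x ≤ C := le_of_abs_le hx
  rw [abs_of_nonneg (sub_nonneg.2 (Real.exp_le_exp.2 h)), abs_of_nonneg (sub_nonneg.2 h)]
  have h2 : Real.exp y = Real.exp x * Real.exp (y - x) := by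
    rw [← Real.exp_add]; ring_nf
  have h3 := Real.add_one_le_exp (y - x)
  have h4 : Real.exp x ≤ Real.exp C := Real.exp_le_exp.2 hx'
  nlinarith [Real.exp_pos x, Real.exp_pos (y - x)]

lemma expsum_pos {n : ℕ} (hn : 0 < n) (a : Fin n → ℝ) :
    0 < ∑ j : Fin n, Real.exp (a j) :=
  Finset.sum_pos (fun j _ => Real.exp_pos _)
    (Finset.univ_nonempty_iff.2 (Fin.pos_iff_nonempty.1 hn))

lemma expsum_ge {n : ℕ} {a : Fin n → ℝ} {C : ℝ} (hC : ∀ m, |a m| ≤ C) :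
    (n : ℝ) * Real.exp (-C) ≤ ∑ j : Fin n, Real.exp (a j) := by
  calc (n : ℝ) * Real.exp (-C) = ∑ _j : Fin n, Real.exp (-C) := by simp [mul_comm]
    _ ≤ ∑ j : Fin n, Real.exp (a j) :=
        Finset.sum_le_sum fun j _ => Real.exp_le_exp.2 (neg_le_of_abs_le (hC j))

lemma softmaxW_nonneg {n : ℕ} (a : Fin n → ℝ) (j : Fin n) : 0 ≤ softmaxW a j :=
  div_nonneg (Real.exp_pos _).le (Finset.sum_nonneg fun _ _ => (Real.exp_pos _).le)

lemma softmaxW_sum {n : ℕ} (hn : 0 < n) (a : Fin n → ℝ) :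
    ∑ j : Fin n, softmaxW a j = 1 := by
  unfold softmaxW
  rw [← Finset.sum_div]
  exact div_self (expsum_pos hn a).ne'

lemma softmaxW_le {n : ℕ} (hn : 0 < n) {a : Fin n → ℝ} {C : ℝ}
    (hC : ∀ m, |a m| ≤ C) (j : Fin n) :
    softmaxW a j ≤ Real.exp (2 * C) / n := by
  have hn' : (0 : ℝ) < n := Nat.cast_pos.2 hn
  have h1 : softmaxW a j ≤ Real.exp C / ((n : ℝ) * Real.exp (-C)) :=
    div_le_div₀ (Real.exp_pos C).le (Real.exp_le_exp.2 (le_of_abs_le (hC j)))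
      (by positivity) (expsum_ge hC)
  refine h1.trans_eq ?_
  rw [Real.exp_neg, two_mul, Real.exp_add]
  field_simp

lemma softmax_l1 {n : ℕ} (hn : 0 < n) (a a' : Fin n → ℝ) {C ε : ℝ} (i : Fin n)
    (hε0 : 0 ≤ ε)
    (hC : ∀ m, |a m| ≤ C) (hC' : ∀ m, |a' m| ≤ C)
    (hε : ∀ m, m ≠ i → |a m - a' m| ≤ ε) :
    ∑ m : Fin n, |softmaxW a m - softmaxW a' m| ≤
      2 * Real.exp (2 * C) * (ε + 2 / n) := by
  have hn' : (0 : ℝ) < n := Nat.cast_pos.2 hn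
  set Z := ∑ j : Fin n, Real.exp (a j) with hZdef
  set Z' := ∑ j : Fin n, Real.exp (a' j) with hZ'def
  have hZpos : 0 < Z := expsum_pos hn a
  have hZ'pos : 0 < Z' := expsum_pos hn a'
  have hC0 : 0 ≤ C := le_trans (abs_nonneg _) (hC i)
  set E := Real.exp C with hEdef
  have hE1 : 1 ≤ E := Real.one_le_exp hC0
  have hEpos : 0 < E := lt_of_lt_of_le one_pos hE1
  set S := ∑ m : Fin n, |Real.exp (a m) - Real.exp (a' m)| with hSdef
  have hSnn : 0 ≤ S := Finset.sum_nonneg fun _ _ => abs_nonneg _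
  have hS : S ≤ (n : ℝ) * (E * ε) + 2 * E := by
    rw [hSdef, ← Finset.add_sum_erase _ _ (Finset.mem_univ i)]
    have h1 : |Real.exp (a i) - Real.exp (a' i)| ≤ 2 * E := by
      have e1 : Real.exp (a i) ≤ E := Real.exp_le_exp.2 (le_of_abs_le (hC i))
      have e2 : Real.exp (a' i) ≤ E := Real.exp_le_exp.2 (le_of_abs_le (hC' i))
      rw [abs_sub_le_iff]
      constructor <;> nlinarith [Real.exp_pos (a i), Real.exp_pos (a' i)]
    have h2 : ∑ m ∈ Finset.univ.erase i, |Real.exp (a m) - Real.exp (a' m)| ≤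
        (n : ℝ) * (E * ε) := by
      calc ∑ m ∈ Finset.univ.erase i, |Real.exp (a m) - Real.exp (a' m)|
          ≤ ∑ _m ∈ Finset.univ.erase i, E * ε := by
            refine Finset.sum_le_sum fun m hm => ?_
            have hmi : m ≠ i := (Finset.mem_erase.1 hm).1
            calc |Real.exp (a m) - Real.exp (a' m)| ≤ E * |a m - a' m| := by
                  rw [hEdef]; exact abs_exp_sub_exp_le (hC m) (hC' m)
              _ ≤ E * ε := mul_le_mul_of_nonneg_left (hε m hmi) hEpos.le
        _ = ((Finset.univ.erase i).card : ℝ) * (E * ε) := by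
            rw [Finset.sum_const, nsmul_eq_mul]
        _ ≤ (n : ℝ) * (E * ε) := by
            refine mul_le_mul_of_nonneg_right ?_ (by positivity)
            have hcard : (Finset.univ.erase i).card ≤ n :=
              le_trans Finset.card_erase_le (by simp)
            exact_mod_cast hcard
    linarith
  have key : ∀ m : Fin n, |softmaxW a m - softmaxW a' m| ≤
      |Real.exp (a m) - Real.exp (a' m)| / Z + Real.exp (a' m) * |Z' - Z| / (Z * Z') := by
    intro m
    have hrw : softmaxW a m - softmaxW a' m =
        (Real.exp (a m) - Real.exp (a' m)) / Z + Real.exp (a' m) * (Z' - Z) / (Z * Z') := by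
      unfold softmaxW
      rw [← hZdef, ← hZ'def]
      field_simp
      ring
    rw [hrw]
    refine (abs_add_le _ _).trans (le_of_eq ?_)
    rw [abs_div, abs_of_pos hZpos, abs_div, abs_mul, abs_mul,
      abs_of_pos (Real.exp_pos _), abs_of_pos hZpos, abs_of_pos hZ'pos]
  have hZZ' : |Z' - Z| ≤ S := by
    rw [hZ'def, hZdef, ← Finset.sum_sub_distrib]
    refine (Finset.abs_sum_le_sum_abs _ _).trans (le_of_eq ?_)
    refine Finset.sum_congr rfl fun m _ => ?_
    rw [abs_sub_comm]
  have hsum : ∑ m : Fin n, |softmaxW a m - softmaxW a' m| ≤ 2 * S / Z := by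
    calc ∑ m : Fin n, |softmaxW a m - softmaxW a' m|
        ≤ ∑ m : Fin n, (|Real.exp (a m) - Real.exp (a' m)| / Z
            + Real.exp (a' m) * |Z' - Z| / (Z * Z')) :=
          Finset.sum_le_sum fun m _ => key m
      _ = S / Z + Z' * |Z' - Z| / (Z * Z') := by
          rw [Finset.sum_add_distrib, ← Finset.sum_div, ← hSdef, ← Finset.sum_div,
            ← Finset.sum_mul, ← hZ'def]
      _ = S / Z + |Z' - Z| / Z := by
          congr 1
          field_simp
      _ ≤ S / Z + S / Z := by gcongr
      _ = 2 * S / Z := by ring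
  have hZE : (n : ℝ) ≤ Z * E := by
    have h := expsum_ge hC
    have hh : Real.exp (-C) * E = 1 := by rw [hEdef, ← Real.exp_add]; simp
    nlinarith
  have h1 : 2 * S / Z ≤ 2 * S * E / n := by
    rw [div_le_div_iff₀ hZpos hn']
    nlinarith
  have h2 : 2 * S * E / n ≤ 2 * Real.exp (2 * C) * (ε + 2 / n) := by
    rw [div_le_iff₀ hn']
    have hrw : (ε + 2 / (n : ℝ)) * n = ε * n + 2 := by field_simp
    have he2 : Real.exp (2 * C) = E * E := by rw [two_mul, Real.exp_add]
    rw [he2]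
    nlinarith
  linarith

lemma lip_norm_le {E F : Type*} [NormedAddCommGroup E] [NormedAddCommGroup F]
    {K : NNReal} {f : E → F} (hf : LipschitzWith K f) (p : E) :
    ‖f p‖ ≤ ‖f 0‖ + K * ‖p‖ := by
  have h := hf.dist_le_mul p 0
  rw [dist_eq_norm, dist_zero_right] at h
  have h3 := norm_sub_norm_le (f p) (f 0)
  linarith

lemma lip_diff_le {E F : Type*} [NormedAddCommGroup E] [NormedAddCommGroup F]
    {K : NNReal} {f : E → F} (hf : LipschitzWith K f) (p q : E) :
    ‖f p - f q‖ ≤ K * ‖p - q‖ := by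
  have h := hf.dist_le_mul p q
  rwa [dist_eq_norm, dist_eq_norm] at h

lemma conv_norm_le {n d : ℕ} (w : Fin n → ℝ) (hw : ∀ m, 0 ≤ w m)
    (hsum : ∑ m : Fin n, w m = 1) (y : Fin n → Fin d → ℝ) {M : ℝ}
    (hy : ∀ m, ‖y m‖ ≤ M) : ‖∑ m : Fin n, w m • y m‖ ≤ M := by
  calc ‖∑ m : Fin n, w m • y m‖ ≤ ∑ m : Fin n, ‖w m • y m‖ := norm_sum_le _ _
    _ ≤ ∑ m : Fin n, w m * M := by
        refine Finset.sum_le_sum fun m _ => ?_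
        rw [norm_smul, Real.norm_eq_abs, abs_of_nonneg (hw m)]
        exact mul_le_mul_of_nonneg_left (hy m) (hw m)
    _ = M := by rw [← Finset.sum_mul, hsum, one_mul]

namespace SoftTransformer

variable {V : Type} {d : ℕ} (T : SoftTransformer V d)

noncomputable def Mb : ℕ → ℝ
  | 0 => ‖T.f0 0‖ + (T.K0 : ℝ) * max T.B 0
  | k + 1 => ‖T.fact k 0‖ + (T.Kact k : ℝ) * Mb k

lemma Mb_nonneg : ∀ k, 0 ≤ T.Mb k
  | 0 => add_nonneg (norm_nonneg _)
      (mul_nonneg (NNReal.coe_nonneg _) (le_max_right _ _))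
  | k + 1 => add_nonneg (norm_nonneg _)
      (mul_nonneg (NNReal.coe_nonneg _) (Mb_nonneg k))

noncomputable def cQb (k : ℕ) : ℝ := ∑ h : Fin T.H, matC (T.Q k h)
noncomputable def cKb (k : ℕ) : ℝ := ∑ h : Fin T.H, matC (T.K k h)

lemma cQb_nonneg (k : ℕ) : 0 ≤ T.cQb k :=
  Finset.sum_nonneg fun _ _ => matC_nonneg _
lemma cKb_nonneg (k : ℕ) : 0 ≤ T.cKb k :=
  Finset.sum_nonneg fun _ _ => matC_nonneg _

noncomputable def Cb (k : ℕ) : ℝ := d * T.cQb k * T.cKb k * (T.Mb k * T.Mb k)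

noncomputable def epsC (k : ℕ) : ℝ := 2 * d * T.cQb k * T.cKb k * T.Mb k

lemma epsC_nonneg (k : ℕ) : 0 ≤ T.epsC k := by
  have h1 := T.cQb_nonneg k
  have h2 := T.cKb_nonneg k
  have h3 := T.Mb_nonneg k
  have h4 : (0 : ℝ) ≤ d := Nat.cast_nonneg d
  exact mul_nonneg (mul_nonneg (mul_nonneg (mul_nonneg (by norm_num) h4) h1) h2) h3

noncomputable def Eb : ℕ → ℝ
  | 0 => 0
  | k + 1 => (T.Kact k : ℝ) * (Eb k +
      (2 * T.Mb k * Real.exp (2 * T.Cb k) * (T.epsC k * Eb k + 2)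
        + Eb k + 2 * T.Mb k * Real.exp (2 * T.Cb k)))

lemma Eb_nonneg : ∀ k, 0 ≤ T.Eb k
  | 0 => le_refl 0
  | k + 1 => by
      have h1 := T.Mb_nonneg k
      have h2 := Eb_nonneg k
      have h3 := T.epsC_nonneg k
      have h4 := (Real.exp_pos (2 * T.Cb k)).le
      have h5 := NNReal.coe_nonneg (T.Kact k)
      show 0 ≤ (T.Kact k : ℝ) * (T.Eb k +
        (2 * T.Mb k * Real.exp (2 * T.Cb k) * (T.epsC k * T.Eb k + 2)
          + T.Eb k + 2 * T.Mb k * Real.exp (2 * T.Cb k)))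
      have h6 : 0 ≤ T.epsC k * T.Eb k + 2 := by nlinarith
      have hA : 0 ≤ 2 * T.Mb k * Real.exp (2 * T.Cb k) :=
        mul_nonneg (mul_nonneg (by norm_num) h1) h4
      have hB : 0 ≤ 2 * T.Mb k * Real.exp (2 * T.Cb k) * (T.epsC k * T.Eb k + 2) :=
        mul_nonneg hA h6
      exact mul_nonneg h5 (by linarith)

lemma Mb_succ (k : ℕ) :
    T.Mb (k + 1) = ‖T.fact k 0‖ + (T.Kact k : ℝ) * T.Mb k := rfl

lemma Eb_succ (k : ℕ) :
    T.Eb (k + 1) = (T.Kact k : ℝ) * (T.Eb k +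
      (2 * T.Mb k * Real.exp (2 * T.Cb k) * (T.epsC k * T.Eb k + 2)
        + T.Eb k + 2 * T.Mb k * Real.exp (2 * T.Cb k))) := rfl

lemma act_zero {n : ℕ} (x : Fin n → V) (i : Fin n) :
    T.act x 0 i = T.f0 (T.emb (x i), T.pos (i.val + 1)) := rfl

lemma act_succ {n : ℕ} (x : Fin n → V) (k : ℕ) (i : Fin n) :
    T.act x (k + 1) i = T.fact k (T.act x k i,
      fun h => ∑ j : Fin n,
        softmaxW (fun j' : Fin n =>
            dotProduct (Matrix.mulVec (T.Q k h) (T.act x k i))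
              (Matrix.mulVec (T.K k h) (T.act x k j'))) j • T.act x k j) := rfl

lemma act_norm_le {n : ℕ} (hn : 0 < n) (x : Fin n → V) :
    ∀ k, ∀ j : Fin n, ‖T.act x k j‖ ≤ T.Mb k := by
  intro k
  induction k with
  | zero =>
    intro j
    rw [act_zero]
    refine (lip_norm_le T.f0_lip _).trans ?_
    show ‖T.f0 0‖ + (T.K0 : ℝ) * ‖(T.emb (x j), T.pos (j.val + 1))‖ ≤
      ‖T.f0 0‖ + (T.K0 : ℝ) * max T.B 0
    have h2 : ‖(T.emb (x j), T.pos (j.val + 1))‖ ≤ max T.B 0 := by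
      rw [Prod.norm_def]
      exact max_le ((T.emb_bound _).trans (le_max_left _ _))
        ((T.pos_bound _).trans (le_max_left _ _))
    have := mul_le_mul_of_nonneg_left h2 (NNReal.coe_nonneg T.K0)
    linarith
  | succ k ih =>
    intro j
    rw [act_succ]
    rw [Mb_succ]
    refine (lip_norm_le (T.fact_lip k) _).trans ?_
    have h2 : ‖((T.act x k j,
        fun h => ∑ m : Fin n,
          softmaxW (fun j' : Fin n =>
              dotProduct (Matrix.mulVec (T.Q k h) (T.act x k j))
                (Matrix.mulVec (T.K k h) (T.act x k j'))) m • T.act x k m) :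
        (Fin d → ℝ) × (Fin T.H → Fin d → ℝ))‖ ≤ T.Mb k := by
      rw [Prod.norm_def]
      refine max_le (ih j) ?_
      rw [pi_norm_le_iff_of_nonneg (T.Mb_nonneg k)]
      intro h
      exact conv_norm_le _ (softmaxW_nonneg _) (softmaxW_sum hn _) _ ih
    have := mul_le_mul_of_nonneg_left h2 (NNReal.coe_nonneg (T.Kact k))
    linarith


lemma act_diff_le {n : ℕ} (hn : 0 < n) (x x' : Fin n → V) (i : Fin n)
    (hx : ∀ j : Fin n, j ≠ i → x j = x' j) :
    ∀ k, ∀ j : Fin n, j ≠ i → ‖T.act x k j - T.act x' k j‖ ≤ T.Eb k / n := by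
  have hn' : (0 : ℝ) < n := Nat.cast_pos.2 hn
  intro k
  induction k with
  | zero =>
    intro j hj
    rw [act_zero, act_zero, hx j hj, sub_self, norm_zero]
    have h0 : T.Eb 0 = 0 := rfl
    rw [h0, zero_div]
  | succ k ih =>
    intro j hj
    have hMb := T.Mb_nonneg k
    have hEb := T.Eb_nonneg k
    have heps := T.epsC_nonneg k
    have hexp := (Real.exp_pos (2 * T.Cb k)).le
    have hMx : ∀ m, ‖T.act x k m‖ ≤ T.Mb k := T.act_norm_le hn x k
    have hMx' : ∀ m, ‖T.act x' k m‖ ≤ T.Mb k := T.act_norm_le hn x' k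
    have hEbn : (0 : ℝ) ≤ T.Eb k / n := div_nonneg hEb hn'.le
    set HB : ℝ := 2 * T.Mb k * Real.exp (2 * T.Cb k) * (T.epsC k * T.Eb k + 2)
        + T.Eb k + 2 * T.Mb k * Real.exp (2 * T.Cb k) with hHBdef
    have hHB : 0 ≤ HB := by
      have h6 : 0 ≤ T.epsC k * T.Eb k + 2 := by nlinarith
      have hA : 0 ≤ 2 * T.Mb k * Real.exp (2 * T.Cb k) :=
        mul_nonneg (mul_nonneg (by norm_num) hMb) hexp
      have hB := mul_nonneg hA h6
      rw [hHBdef]; linarith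
    have hhead : ∀ hh : Fin T.H,
        ‖(∑ m : Fin n, softmaxW (fun j' : Fin n =>
              dotProduct (Matrix.mulVec (T.Q k hh) (T.act x k j))
                (Matrix.mulVec (T.K k hh) (T.act x k j'))) m • T.act x k m)
          - (∑ m : Fin n, softmaxW (fun j' : Fin n =>
              dotProduct (Matrix.mulVec (T.Q k hh) (T.act x' k j))
                (Matrix.mulVec (T.K k hh) (T.act x' k j'))) m • T.act x' k m)‖
          ≤ HB / n := by
      intro hh
      set y := T.act x k with hy
      set y' := T.act x' k with hy'
      set a : Fin n → ℝ := fun m =>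
        dotProduct (Matrix.mulVec (T.Q k hh) (y j))
          (Matrix.mulVec (T.K k hh) (y m)) with ha
      set a' : Fin n → ℝ := fun m =>
        dotProduct (Matrix.mulVec (T.Q k hh) (y' j))
          (Matrix.mulVec (T.K k hh) (y' m)) with ha'
      have hQle : matC (T.Q k hh) ≤ T.cQb k :=
        Finset.single_le_sum (f := fun h => matC (T.Q k h))
          (fun h _ => matC_nonneg _) (Finset.mem_univ hh)
      have hKle : matC (T.K k hh) ≤ T.cKb k :=
        Finset.single_le_sum (f := fun h => matC (T.K k h))
          (fun h _ => matC_nonneg _) (Finset.mem_univ hh)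
      set D : ℝ := (d : ℝ) * matC (T.Q k hh) * matC (T.K k hh) with hD
      set DC : ℝ := (d : ℝ) * T.cQb k * T.cKb k with hDC
      have hDnn : 0 ≤ D :=
        mul_nonneg (mul_nonneg (Nat.cast_nonneg d) (matC_nonneg _)) (matC_nonneg _)
      have hDDC : D ≤ DC := by
        have m1 := matC_nonneg (T.Q k hh)
        have m2 := matC_nonneg (T.K k hh)
        have m3 := T.cQb_nonneg k
        have m4 := T.cKb_nonneg k
        have hd : (0 : ℝ) ≤ d := Nat.cast_nonneg d
        rw [hD, hDC]
        exact mul_le_mul (mul_le_mul_of_nonneg_left hQle hd) hKle m2 (mul_nonneg hd m3)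
      have hDCnn : 0 ≤ DC := hDnn.trans hDDC
      have haC : ∀ m, |a m| ≤ T.Cb k := by
        intro m
        refine (score_abs_le _ _ _ _).trans ?_
        have h1 : ‖y j‖ * ‖y m‖ ≤ T.Mb k * T.Mb k :=
          mul_le_mul (hMx j) (hMx m) (norm_nonneg _) hMb
        calc D * (‖y j‖ * ‖y m‖) ≤ D * (T.Mb k * T.Mb k) :=
              mul_le_mul_of_nonneg_left h1 hDnn
          _ ≤ DC * (T.Mb k * T.Mb k) :=
              mul_le_mul_of_nonneg_right hDDC (mul_nonneg hMb hMb)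
          _ = T.Cb k := by rw [hDC]; rfl
      have ha'C : ∀ m, |a' m| ≤ T.Cb k := by
        intro m
        refine (score_abs_le _ _ _ _).trans ?_
        have h1 : ‖y' j‖ * ‖y' m‖ ≤ T.Mb k * T.Mb k :=
          mul_le_mul (hMx' j) (hMx' m) (norm_nonneg _) hMb
        calc D * (‖y' j‖ * ‖y' m‖) ≤ D * (T.Mb k * T.Mb k) :=
              mul_le_mul_of_nonneg_left h1 hDnn
          _ ≤ DC * (T.Mb k * T.Mb k) :=
              mul_le_mul_of_nonneg_right hDDC (mul_nonneg hMb hMb)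
          _ = T.Cb k := by rw [hDC]; rfl
      have hdiff : ∀ m : Fin n, m ≠ i → |a m - a' m| ≤ T.epsC k * T.Eb k / n := by
        intro m hm
        have hsplit : a m - a' m =
            dotProduct (Matrix.mulVec (T.Q k hh) (y j - y' j))
              (Matrix.mulVec (T.K k hh) (y m))
            + dotProduct (Matrix.mulVec (T.Q k hh) (y' j))
              (Matrix.mulVec (T.K k hh) (y m - y' m)) := by
          rw [ha, ha']
          simp only [Matrix.mulVec_sub, sub_dotProduct, dotProduct_sub]
          ring
        rw [hsplit]
        have e1 : |dotProduct (Matrix.mulVec (T.Q k hh) (y j - y' j))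
            (Matrix.mulVec (T.K k hh) (y m))| ≤ DC * ((T.Eb k / n) * T.Mb k) := by
          refine (score_abs_le _ _ _ _).trans ?_
          have h1 : ‖y j - y' j‖ * ‖y m‖ ≤ (T.Eb k / n) * T.Mb k :=
            mul_le_mul (ih j hj) (hMx m) (norm_nonneg _) hEbn
          calc D * (‖y j - y' j‖ * ‖y m‖) ≤ D * ((T.Eb k / n) * T.Mb k) :=
                mul_le_mul_of_nonneg_left h1 hDnn
            _ ≤ DC * ((T.Eb k / n) * T.Mb k) :=
                mul_le_mul_of_nonneg_right hDDC (mul_nonneg hEbn hMb)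
        have e2 : |dotProduct (Matrix.mulVec (T.Q k hh) (y' j))
            (Matrix.mulVec (T.K k hh) (y m - y' m))| ≤ DC * (T.Mb k * (T.Eb k / n)) := by
          refine (score_abs_le _ _ _ _).trans ?_
          have h1 : ‖y' j‖ * ‖y m - y' m‖ ≤ T.Mb k * (T.Eb k / n) :=
            mul_le_mul (hMx' j) (ih m hm) (norm_nonneg _) hMb
          calc D * (‖y' j‖ * ‖y m - y' m‖) ≤ D * (T.Mb k * (T.Eb k / n)) :=
                mul_le_mul_of_nonneg_left h1 hDnn
            _ ≤ DC * (T.Mb k * (T.Eb k / n)) :=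
                mul_le_mul_of_nonneg_right hDDC (mul_nonneg hMb hEbn)
        refine (abs_add_le _ _).trans ?_
        refine (add_le_add e1 e2).trans (le_of_eq ?_)
        rw [hDC]
        show (d : ℝ) * T.cQb k * T.cKb k * (T.Eb k / ↑n * T.Mb k)
            + (d : ℝ) * T.cQb k * T.cKb k * (T.Mb k * (T.Eb k / ↑n))
            = T.epsC k * T.Eb k / ↑n
        unfold epsC
        ring
      have hL1 : ∑ m : Fin n, |softmaxW a m - softmaxW a' m| ≤
          2 * Real.exp (2 * T.Cb k) * (T.epsC k * T.Eb k / n + 2 / n) :=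
        softmax_l1 hn a a' i (div_nonneg (mul_nonneg heps hEb) hn'.le) haC ha'C hdiff
      have hdecomp : (∑ m : Fin n, softmaxW a m • y m) - (∑ m : Fin n, softmaxW a' m • y' m)
          = (∑ m : Fin n, (softmaxW a m - softmaxW a' m) • y m)
            + (∑ m : Fin n, softmaxW a' m • (y m - y' m)) := by
        rw [← Finset.sum_add_distrib, ← Finset.sum_sub_distrib]
        refine Finset.sum_congr rfl fun m _ => ?_
        rw [sub_smul, smul_sub]
        abel
      rw [hdecomp]
      have n1 : ‖∑ m : Fin n, (softmaxW a m - softmaxW a' m) • y m‖ ≤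
          2 * Real.exp (2 * T.Cb k) * (T.epsC k * T.Eb k / n + 2 / n) * T.Mb k := by
        calc ‖∑ m : Fin n, (softmaxW a m - softmaxW a' m) • y m‖
            ≤ ∑ m : Fin n, ‖(softmaxW a m - softmaxW a' m) • y m‖ := norm_sum_le _ _
          _ ≤ ∑ m : Fin n, |softmaxW a m - softmaxW a' m| * T.Mb k := by
              refine Finset.sum_le_sum fun m _ => ?_
              rw [norm_smul, Real.norm_eq_abs]
              exact mul_le_mul_of_nonneg_left (hMx m) (abs_nonneg _)
          _ = (∑ m : Fin n, |softmaxW a m - softmaxW a' m|) * T.Mb k :=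
              (Finset.sum_mul _ _ _).symm
          _ ≤ 2 * Real.exp (2 * T.Cb k) * (T.epsC k * T.Eb k / n + 2 / n) * T.Mb k :=
              mul_le_mul_of_nonneg_right hL1 hMb
      have n2 : ‖∑ m : Fin n, softmaxW a' m • (y m - y' m)‖ ≤
          Real.exp (2 * T.Cb k) / n * (2 * T.Mb k) + T.Eb k / n := by
        calc ‖∑ m : Fin n, softmaxW a' m • (y m - y' m)‖
            ≤ ∑ m : Fin n, softmaxW a' m * ‖y m - y' m‖ := by
              refine (norm_sum_le _ _).trans (Finset.sum_le_sum fun m _ => ?_)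
              rw [norm_smul, Real.norm_eq_abs, abs_of_nonneg (softmaxW_nonneg _ _)]
          _ = softmaxW a' i * ‖y i - y' i‖
              + ∑ m ∈ Finset.univ.erase i, softmaxW a' m * ‖y m - y' m‖ :=
            (Finset.add_sum_erase _ _ (Finset.mem_univ i)).symm
          _ ≤ Real.exp (2 * T.Cb k) / n * (2 * T.Mb k) + T.Eb k / n := by
            refine add_le_add ?_ ?_
            · have hw := softmaxW_le hn ha'C i
              have hyy : ‖y i - y' i‖ ≤ 2 * T.Mb k := by
                refine (norm_sub_le _ _).trans ?_
                linarith [hMx i, hMx' i]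
              exact mul_le_mul hw hyy (norm_nonneg _) (by positivity)
            · calc ∑ m ∈ Finset.univ.erase i, softmaxW a' m * ‖y m - y' m‖
                  ≤ ∑ m ∈ Finset.univ.erase i, softmaxW a' m * (T.Eb k / n) := by
                    refine Finset.sum_le_sum fun m hm => ?_
                    exact mul_le_mul_of_nonneg_left (ih m (Finset.mem_erase.1 hm).1)
                      (softmaxW_nonneg _ _)
                _ ≤ ∑ m : Fin n, softmaxW a' m * (T.Eb k / n) := by
                    refine Finset.sum_le_sum_of_subset_of_nonneg (Finset.subset_univ _) ?_
                    intro m _ _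
                    exact mul_nonneg (softmaxW_nonneg _ _) hEbn
                _ = T.Eb k / n := by rw [← Finset.sum_mul, softmaxW_sum hn, one_mul]
      refine (norm_add_le _ _).trans ?_
      refine (add_le_add n1 n2).trans (le_of_eq ?_)
      rw [hHBdef]
      field_simp
      ring
    have hstep : (T.Kact k : ℝ) * ((T.Eb k + HB) / n) = T.Eb (k + 1) / n := by
      rw [Eb_succ, hHBdef]
      ring
    rw [act_succ, act_succ, ← hstep]
    refine (lip_diff_le (T.fact_lip k) _ _).trans
      (mul_le_mul_of_nonneg_left ?_ (NNReal.coe_nonneg (T.Kact k)))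
    rw [Prod.mk_sub_mk, Prod.norm_def]
    refine max_le ?_ ?_
    · exact (ih j hj).trans ((div_le_div_iff_of_pos_right hn').2 (by linarith))
    · rw [pi_norm_le_iff_of_nonneg (div_nonneg (add_nonneg hEb hHB) hn'.le)]
      intro hh
      exact (hhead hh).trans ((div_le_div_iff_of_pos_right hn').2 (by linarith))

end SoftTransformer

/-- **Single-symbol influence is `O(1/n)` for soft attention.**  For every
soft-attention transformer there is a constant `K`, depending only on the transformer
(its layers, heads, embedding bounds, parameter matrices, and Lipschitz constants) but
not on the input length, such that for all `n ≥ 2` and all inputs `x, x'` of length `n`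
differing in exactly one position `i` that is not the last position, the final
activations `y_n^{(L)}` differ in norm by at most `K / n`. -/
theorem soft_attention_single_symbol_influence {V : Type} {d : ℕ}
    (T : SoftTransformer V d) :
    ∃ K : ℝ, ∀ (n : ℕ), 2 ≤ n → ∀ (hn : 0 < n) (x x' : Fin n → V) (i : Fin n),
      i.val + 1 < n → x i ≠ x' i → (∀ j : Fin n, j ≠ i → x j = x' j) →
      ‖T.act x T.L ⟨n - 1, Nat.sub_lt hn one_pos⟩ -
          T.act x' T.L ⟨n - 1, Nat.sub_lt hn one_pos⟩‖ ≤ K / n := by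
  refine ⟨T.Eb T.L, ?_⟩
  intro n _hn2 hn x x' i hi _hne hagree
  have hji : (⟨n - 1, Nat.sub_lt hn one_pos⟩ : Fin n) ≠ i := by
    intro h
    have hv : i.val = n - 1 := by rw [← h]
    omega
  exact T.act_diff_le hn x x' i hagree T.L _ hji
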